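/- Let f ∈ V and let ū ∈ H satisfy G ū = T* f. Then T ū = T(P ū) and B(T ū) = f; that is, u := T(P ū) = F* D_V⁻¹ 𝐏 ū is the unique solution in V of the elliptic operator equation B u = f. -/

import Mathlib

open scoped RealInnerProductSpace

/-- If `ubar` solves the discretized equation `G ubar = T* f`, then `T ubar = T (P ubar)` and
`u := T (P ubar)` is the unique solution in `V` of the elliptic equation `B u = f`. -/
theorem recovery_of_continuous_solution_from_discrete
    {V H : Type*} [NormedAddCommGroup V] [InnerProductSpace ℝ V] [CompleteSpace V]
    [NormedAddCommGroup H] [InnerProductSpace ℝ H] [CompleteSpace H]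
    (B : V →L[ℝ] V) (α : ℝ) (hα : 0 < α)
    (hB : ∀ v : V, α * ‖v‖ ^ 2 ≤ ⟪B v, v⟫)
    (T : H →L[ℝ] V) (hT : Function.Surjective T)
    (G : H →L[ℝ] H) (hG : G = (ContinuousLinearMap.adjoint T).comp (B.comp T))
    (P : H →L[ℝ] H)
    (hP : ∀ x : H, P x ∈ (LinearMap.ker (T : H →ₗ[ℝ] V))ᗮ ∧ x - P x ∈ LinearMap.ker (T : H →ₗ[ℝ] V))
    (f : V) (ubar : H) (hubar : G ubar = ContinuousLinearMap.adjoint T f) :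
    T ubar = T (P ubar) ∧ B (T (P ubar)) = f ∧ ∀ w : V, B w = f → w = T (P ubar) := by
  have hTP : T ubar = T (P ubar) := by
    have h : T (ubar - P ubar) = 0 := (hP ubar).2
    rw [map_sub] at h
    exact sub_eq_zero.mp h
  -- B injective from coercivity
  have hBinj : ∀ v : V, B v = 0 → v = 0 := by
    intro v hv
    have h1 : α * ‖v‖ ^ 2 ≤ 0 := by
      have := hB v
      rw [hv, inner_zero_left] at this
      linarith
    have h2 : ‖v‖ ^ 2 ≤ 0 := le_of_mul_le_mul_left (by linarith) hα
    have hn : ‖v‖ = 0 := by nlinarith [norm_nonneg v, sq_nonneg ‖v‖]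
    exact norm_eq_zero.mp hn
  have hBTf : B (T ubar) = f := by
    have h : ContinuousLinearMap.adjoint T (B (T ubar) - f) = 0 := by
      rw [map_sub, sub_eq_zero]
      simpa [hG] using hubar
    -- adjoint injective since T surjective
    have h2 : ∀ x : H, ⟪B (T ubar) - f, T x⟫ = 0 := by
      intro x
      rw [← ContinuousLinearMap.adjoint_inner_left, h, inner_zero_left]
    have h3 : B (T ubar) - f = 0 := by
      apply ext_inner_right ℝ
      intro y
      obtain ⟨x, rfl⟩ := hT y
      simpa using h2 x
    exact sub_eq_zero.mp h3
  refine ⟨hTP, by rw [← hTP]; exact hBTf, ?_⟩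
  intro w hw
  rw [← hTP]
  have : B (w - T ubar) = 0 := by rw [map_sub, hw, hBTf, sub_self]
  have := hBinj _ this
  exact sub_eq_zero.mp this
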